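/- Let p ≥ 1, X a type, and f : X → ℝ^p with f_i(x) > 0 for all x ∈ X and all i. Fix x' ∈ X and define λ ∈ ℝ^p by λ_i = 1/f_i(x'). If x ∈ X satisfies λ·f(x) ≤ λ·f(x'') for all x'' ∈ X, then there exists α ∈ ℝ^p such that α_i ≥ 1 for all i, α_j = 1 for at least one j, Σ_{i : α_i > 1} α_i ≤ p, and f_i(x) ≤ α_i · f_i(x') for all i. -/

import Mathlib

open Finset

theorem stmt_14 (p : ℕ) (hp : 1 ≤ p) (X : Type*) (f : X → Fin p → ℝ)
    (hf : ∀ (x : X) (i : Fin p), 0 < f x i) (x' : X) (x : X)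
    (hx : ∀ x'' : X, ∑ i, (1 / f x' i) * f x i ≤ ∑ i, (1 / f x' i) * f x'' i) :
    ∃ α : Fin p → ℝ, (∀ i, 1 ≤ α i) ∧ (∃ j, α j = 1) ∧
      (∑ i ∈ Finset.univ.filter (fun i => 1 < α i), α i) ≤ (p : ℝ) ∧
      ∀ i, f x i ≤ α i * f x' i := by
  set r : Fin p → ℝ := fun i => f x i / f x' i with hr
  have hrpos : ∀ i, 0 < r i := fun i => div_pos (hf x i) (hf x' i)
  have hrval : ∀ i, (1 / f x' i) * f x i = r i := fun i => by
    field_simp [hr]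
    rfl
  have hsum : ∑ i, r i ≤ (p : ℝ) := by
    have h := hx x'
    simp only [hrval] at h
    have h2 : ∑ i : Fin p, (1 / f x' i) * f x' i = (p : ℝ) := by
      have : ∀ i : Fin p, (1 / f x' i) * f x' i = 1 := fun i =>
        one_div_mul_cancel (ne_of_gt (hf x' i))
      rw [Finset.sum_congr rfl (fun i _ => this i)]
      simp
    linarith [h, h2.le]
  refine ⟨fun i => max (r i) 1, fun i => le_max_right _ _, ?_, ?_, ?_⟩
  · by_contra h
    push_neg at h
    have hgt : ∀ i, 1 < r i := by
      intro i
      by_contra hle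
      exact h i (max_eq_right (not_lt.mp hle))
    have : (p : ℝ) < ∑ i, r i := by
      calc (p : ℝ) = ∑ _i : Fin p, (1 : ℝ) := by simp
        _ < ∑ i, r i := by
            apply Finset.sum_lt_sum_of_nonempty
            · exact Finset.univ_nonempty_iff.mpr ⟨⟨0, hp⟩⟩
            · intro i _; exact hgt i
    linarith
  · calc ∑ i ∈ Finset.univ.filter (fun i => 1 < max (r i) 1), max (r i) 1
        = ∑ i ∈ Finset.univ.filter (fun i => 1 < max (r i) 1), r i := by
          apply Finset.sum_congr rfl
          intro i hi
          simp only [Finset.mem_filter] at hi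
          exact max_eq_left ((lt_max_iff.mp hi.2).resolve_right (lt_irrefl 1)).le
      _ ≤ ∑ i, r i := Finset.sum_le_sum_of_subset_of_nonneg (Finset.filter_subset _ _)
          (fun i _ _ => (hrpos i).le)
      _ ≤ (p : ℝ) := hsum
  · intro i
    have : f x i ≤ r i * f x' i := by
      rw [hr]
      rw [div_mul_cancel₀ _ (ne_of_gt (hf x' i))]
    exact this.trans (mul_le_mul_of_nonneg_right (le_max_left _ _) (hf x' i).le)
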